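/- arXiv:1906.11749 — 2 statements merged into one kernel-verified Lean document; each statement's English description precedes it below -/
import Mathlib

section
/- Let N ≥ 0 and let g : ℂ^{N+1} ∖ {0} → ℝ be defined by g(z) = −(∑_{k=0}^{N} k·|z_k|²)/(∑_{k=0}^{N} |z_k|²). For every nonzero z ∈ ℂ^{N+1}, the real Fréchet derivative of g vanishes at z if and only if z has exactly one nonzero coordinate; moreover, if z_j ≠ 0 and z_k = 0 for all k ≠ j, then g(z) = −j. -/
/-- The scale-invariant function `g(z) = -(∑ k |z_k|²)/(∑ |z_k|²)` on `ℂ^{N+1} ∖ {0}`,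
inducing the perfect Morse function on `ℂP^N`: its real Fréchet derivative vanishes at a
nonzero `z` if and only if `z` has exactly one nonzero coordinate, and at such a point
with `z_j ≠ 0` the value of `g` is `-j`. -/
theorem stmt0 (N : ℕ)
    (g : (Fin (N + 1) → ℂ) → ℝ)
    (hg : ∀ z, g z =
      -(∑ k : Fin (N + 1), ((k : ℕ) : ℝ) * ‖z k‖ ^ 2) /
        (∑ k : Fin (N + 1), ‖z k‖ ^ 2)) :
    ∀ z : Fin (N + 1) → ℂ, z ≠ 0 →
      ((fderiv ℝ g z = 0) ↔ (∃! j : Fin (N + 1), z j ≠ 0)) ∧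
      (∀ j : Fin (N + 1), z j ≠ 0 → (∀ k, k ≠ j → z k = 0) →
        g z = -((j : ℕ) : ℝ)) := by
  classical
  intro z hz
  set Af : (Fin (N + 1) → ℂ) → ℝ := fun y => ∑ k : Fin (N + 1), ((k : ℕ) : ℝ) * ‖y k‖ ^ 2
    with hAf
  set Bf : (Fin (N + 1) → ℂ) → ℝ := fun y => ∑ k : Fin (N + 1), ‖y k‖ ^ 2 with hBf
  obtain ⟨j0, hj0⟩ : ∃ j, z j ≠ 0 := by
    by_contra h; push_neg at h; exact hz (funext h)
  have hBpos : 0 < Bf z := by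
    refine Finset.sum_pos' (fun k _ => by positivity) ⟨j0, Finset.mem_univ _, pow_pos (norm_pos_iff.mpr hj0) 2⟩
  have hBne : Bf z ≠ 0 := ne_of_gt hBpos
  -- derivatives of the coordinate square norms
  have hk : ∀ k : Fin (N + 1), HasFDerivAt (fun y : Fin (N + 1) → ℂ => ‖y k‖ ^ 2)
      (2 • (innerSL ℝ (z k)).comp (ContinuousLinearMap.proj k)) z := fun k =>
    (ContinuousLinearMap.proj k : (Fin (N + 1) → ℂ) →L[ℝ] ℂ).hasFDerivAt.norm_sq
  set L : Fin (N + 1) → ((Fin (N + 1) → ℂ) →L[ℝ] ℝ) :=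
    fun k => 2 • (innerSL ℝ (z k)).comp (ContinuousLinearMap.proj k) with hL
  set LA : (Fin (N + 1) → ℂ) →L[ℝ] ℝ := ∑ k : Fin (N + 1), ((k : ℕ) : ℝ) • L k with hLA
  set LB : (Fin (N + 1) → ℂ) →L[ℝ] ℝ := ∑ k : Fin (N + 1), L k with hLB
  have hAd : HasFDerivAt Af LA z := HasFDerivAt.fun_sum fun k _ => (hk k).const_mul _
  have hBd : HasFDerivAt Bf LB z := HasFDerivAt.fun_sum fun k _ => hk k
  have hinv : HasFDerivAt (fun y => (Bf y)⁻¹)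
      ((ContinuousLinearMap.smulRight (1 : ℝ →L[ℝ] ℝ) (-(Bf z ^ 2)⁻¹)).comp LB) z :=
    (hasFDerivAt_inv hBne).comp z hBd
  set D : (Fin (N + 1) → ℂ) →L[ℝ] ℝ :=
    (-(Af z)) • ((ContinuousLinearMap.smulRight (1 : ℝ →L[ℝ] ℝ) (-(Bf z ^ 2)⁻¹)).comp LB) + (Bf z)⁻¹ • (-LA)
    with hD
  have hgfun : g = fun y => (-(Af y)) * (Bf y)⁻¹ := by
    funext y; rw [hg y, div_eq_mul_inv]
  have hgd : HasFDerivAt g D z := by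
    rw [hgfun]; exact (hAd.neg).mul hinv
  have hfd : fderiv ℝ g z = D := hgd.fderiv
  -- pointwise value of D
  have hDv : ∀ v, D v = (Af z * LB v - Bf z * LA v) / Bf z ^ 2 := by
    intro v
    simp only [hD, ContinuousLinearMap.add_apply, ContinuousLinearMap.smul_apply,
      ContinuousLinearMap.comp_apply, ContinuousLinearMap.smulRight_apply,
      ContinuousLinearMap.one_apply, ContinuousLinearMap.neg_apply, smul_eq_mul]
    field_simp
    ring
  have hDzero : ∀ v, D v = 0 ↔ Af z * LB v = Bf z * LA v := by
    intro v
    rw [hDv, div_eq_zero_iff, sub_eq_zero]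
    simp [pow_eq_zero_iff, hBne]
  -- evaluation of L on single vectors
  have hLsingle : ∀ i k : Fin (N + 1),
      L k (Pi.single i (z i)) = if k = i then 2 * ‖z i‖ ^ 2 else 0 := by
    intro i k
    by_cases h : k = i
    · subst h
      simp only [hL, ContinuousLinearMap.smul_apply, ContinuousLinearMap.comp_apply,
        ContinuousLinearMap.proj_apply, Pi.single_eq_same, innerSL_apply_apply,
        real_inner_self_eq_norm_sq, if_pos rfl, smul_eq_mul]
      norm_num
    · simp only [hL, ContinuousLinearMap.smul_apply, ContinuousLinearMap.comp_apply,
        ContinuousLinearMap.proj_apply, Pi.single_eq_of_ne h, innerSL_apply_apply,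
        inner_zero_right, smul_eq_mul, mul_zero, if_neg h, smul_zero]
  have hLBsingle : ∀ i : Fin (N + 1), LB (Pi.single i (z i)) = 2 * ‖z i‖ ^ 2 := by
    intro i
    simp only [hLB, ContinuousLinearMap.sum_apply]
    rw [Finset.sum_eq_single i]
    · rw [hLsingle]; simp
    · intro k _ hki; rw [hLsingle]; simp [hki]
    · simp
  have hLAsingle : ∀ i : Fin (N + 1),
      LA (Pi.single i (z i)) = ((i : ℕ) : ℝ) * (2 * ‖z i‖ ^ 2) := by
    intro i
    simp only [hLA, ContinuousLinearMap.sum_apply, ContinuousLinearMap.smul_apply, smul_eq_mul]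
    rw [Finset.sum_eq_single i]
    · rw [hLsingle]; simp
    · intro k _ hki; rw [hLsingle]; simp [hki]
    · simp
  -- value of Af, Bf when only coordinate j is nonzero
  have hval : ∀ j : Fin (N + 1), (∀ k, k ≠ j → z k = 0) →
      Af z = ((j : ℕ) : ℝ) * ‖z j‖ ^ 2 ∧ Bf z = ‖z j‖ ^ 2 := by
    intro j hzero
    have eA : Af z = ∑ k : Fin (N + 1), ((k : ℕ) : ℝ) * ‖z k‖ ^ 2 := rfl
    have eB : Bf z = ∑ k : Fin (N + 1), ‖z k‖ ^ 2 := rfl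
    constructor
    · rw [eA, Finset.sum_eq_single j]
      · intro k _ hkj; rw [hzero k hkj]; simp
      · simp
    · rw [eB, Finset.sum_eq_single j]
      · intro k _ hkj; rw [hzero k hkj]; simp
      · simp
  constructor
  · constructor
    · -- critical point ⇒ unique nonzero coordinate
      intro h0
      have hcrit : ∀ i : Fin (N + 1), z i ≠ 0 → Af z = ((i : ℕ) : ℝ) * Bf z := by
        intro i hi
        have hD0 : D (Pi.single i (z i)) = 0 := by rw [← hfd, h0]; rfl
        rw [hDzero] at hD0
        rw [hLBsingle, hLAsingle] at hD0
        have hni : (0:ℝ) < ‖z i‖ ^ 2 := pow_pos (norm_pos_iff.mpr hi) 2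
        apply mul_right_cancel₀ (mul_ne_zero two_ne_zero hni.ne')
        linear_combination hD0
      refine ⟨j0, hj0, fun i hi => ?_⟩
      have h1 := hcrit i hi
      have h2 := hcrit j0 hj0
      have : ((i : ℕ) : ℝ) = ((j0 : ℕ) : ℝ) :=
        mul_right_cancel₀ hBne (by rw [← h1, ← h2])
      exact Fin.ext (Nat.cast_injective this)
    · -- unique nonzero coordinate ⇒ critical point
      rintro ⟨j, hj, huniq⟩
      have hzero : ∀ k, k ≠ j → z k = 0 := by
        intro k hk
        by_contra h
        exact hk (huniq k h)
      obtain ⟨hAv, hBv⟩ := hval j hzero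
      rw [hfd]
      ext v
      rw [ContinuousLinearMap.zero_apply, hDzero]
      have hLkv : ∀ k : Fin (N + 1), k ≠ j → L k v = 0 := by
        intro k hk
        simp [hL, hzero k hk]
      have hLBv : LB v = L j v := by
        simp only [hLB, ContinuousLinearMap.sum_apply]
        rw [Finset.sum_eq_single j]
        · intro k _ hkj; exact hLkv k hkj
        · simp
      have hLAv : LA v = ((j : ℕ) : ℝ) * L j v := by
        simp only [hLA, ContinuousLinearMap.sum_apply, ContinuousLinearMap.smul_apply,
          smul_eq_mul]
        rw [Finset.sum_eq_single j]
        · intro k _ hkj; rw [hLkv k hkj]; ring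
        · simp
      rw [hLBv, hLAv, hAv, hBv]
      ring
  · -- value at critical points
    intro j hj hzero
    obtain ⟨hAv, hBv⟩ := hval j hzero
    rw [hg z]
    have : (∑ k : Fin (N + 1), ((k : ℕ) : ℝ) * ‖z k‖ ^ 2) = Af z := rfl
    rw [this, hAv]
    have : (∑ k : Fin (N + 1), ‖z k‖ ^ 2) = Bf z := rfl
    rw [this, hBv]
    have hn : (0:ℝ) < ‖z j‖ ^ 2 := pow_pos (norm_pos_iff.mpr hj) 2
    rw [neg_div, mul_div_assoc, div_self hn.ne', mul_one]
end

section
/- Let N ≥ 0, let w ∈ ℂ^{N+1} be nonzero, and define c : ℝ → ℂ^{N+1} by c(t)_k = e^{2kt}·w_k for 0 ≤ k ≤ N. Then for each k and each t ∈ ℝ, the derivative of t ↦ c(t)_k equals 2k·c(t)_k; and, setting j = max{k : w_k ≠ 0} and i = min{k : w_k ≠ 0}, the normalized curve c(t)/‖c(t)‖ converges as t → +∞ to (w_j/|w_j|)·e_j and as t → −∞ to (w_i/|w_i|)·e_i, where e_k denotes the k-th standard basis vector of ℂ^{N+1} and ‖·‖ the standard Hermitian norm. -/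
open Filter

lemma aux2 (N : ℕ) (w : EuclideanSpace ℂ (Fin (N + 1)))
    (c : ℝ → EuclideanSpace ℂ (Fin (N + 1)))
    (hc : ∀ t k, c t k = (Real.exp (2 * ((k : ℕ) : ℝ) * t) : ℂ) * w k)
    (m : Fin (N + 1)) (hm : w m ≠ 0) (l : Filter ℝ)
    (hl : ∀ k : Fin (N + 1), w k ≠ 0 → k ≠ m →
      Tendsto (fun t => Real.exp (2 * (((k : ℕ) : ℝ) - ((m : ℕ) : ℝ)) * t)) l (nhds 0)) :
    Tendsto (fun t => ‖c t‖⁻¹ • c t) l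
      (nhds ((w m / (‖w m‖ : ℂ)) • EuclideanSpace.single m (1 : ℂ))) := by
  set d : ℝ → EuclideanSpace ℂ (Fin (N + 1)) :=
    fun t => WithLp.toLp 2 (fun k : Fin (N + 1) => (Real.exp (2 * (((k : ℕ) : ℝ) - ((m : ℕ) : ℝ)) * t) : ℂ) * w k) with hd
  set v : EuclideanSpace ℂ (Fin (N + 1)) := EuclideanSpace.single m (w m) with hv
  have hvne : v ≠ 0 := by
    intro h
    apply hm
    have := congrFun (congrArg (fun x : EuclideanSpace ℂ (Fin (N+1)) => (x : Fin (N+1) → ℂ)) h) m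
    simpa [hv, EuclideanSpace.single_apply] using this
  have hdt : Tendsto d l (nhds v) := by
    refine ((PiLp.continuous_toLp 2 (fun _ : Fin (N + 1) => ℂ)).tendsto v.ofLp).comp (f := fun t => (d t).ofLp) ?_
    rw [tendsto_pi_nhds]
    intro k
    by_cases hk : k = m
    · subst hk
      simp only [hd, sub_self, mul_zero, zero_mul, Real.exp_zero, Complex.ofReal_one, one_mul]
      have : v k = w k := by simp [hv, EuclideanSpace.single_apply]
      rw [this]
      exact tendsto_const_nhds
    · by_cases hwk : w k = 0
      · have : v k = 0 := by simp [hv, EuclideanSpace.single_apply, hk]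
        rw [this]
        simp only [hd, hwk, mul_zero]
        exact tendsto_const_nhds
      · have : v k = 0 := by simp [hv, EuclideanSpace.single_apply, hk]
        rw [this]
        have h1 : Tendsto (fun t => (Real.exp (2 * (((k : ℕ) : ℝ) - ((m : ℕ) : ℝ)) * t) : ℂ)) l (nhds 0) := by
          have := (hl k hwk hk)
          have := (Complex.continuous_ofReal.tendsto 0).comp this
          simpa only [Function.comp_def, Complex.ofReal_zero] using this
        simpa only [zero_mul] using h1.mul_const (w k)
  have hcd : ∀ t, c t = Real.exp (2 * ((m : ℕ) : ℝ) * t) • d t := by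
    intro t
    ext k
    simp only [hc, hd, PiLp.smul_apply, Complex.real_smul]
    rw [← mul_assoc, ← Complex.ofReal_mul, ← Real.exp_add]
    ring_nf
  have hnc : ∀ t, ‖c t‖⁻¹ • c t = ‖d t‖⁻¹ • d t := by
    intro t
    rw [hcd t, norm_smul, smul_smul, Real.norm_eq_abs,
      abs_of_pos (Real.exp_pos _), mul_inv]
    rw [mul_comm (Real.exp _)⁻¹, mul_assoc, inv_mul_cancel₀ (Real.exp_pos _).ne', mul_one]
  have hcont : ContinuousAt (fun x : EuclideanSpace ℂ (Fin (N+1)) => ‖x‖⁻¹ • x) v := by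
    exact ((continuous_norm.continuousAt).inv₀ (norm_ne_zero_iff.mpr hvne)).smul continuousAt_id
  have hfinal : Tendsto (fun t => ‖d t‖⁻¹ • d t) l (nhds (‖v‖⁻¹ • v)) :=
    (hcont.tendsto).comp hdt
  have hve : ‖v‖⁻¹ • v = (w m / (‖w m‖ : ℂ)) • EuclideanSpace.single m (1 : ℂ) := by
    have h1 : v = w m • EuclideanSpace.single m (1 : ℂ) := by
      ext k
      simp [hv, EuclideanSpace.single_apply]
    have hnv : ‖v‖ = ‖w m‖ := by rw [hv]; exact EuclideanSpace.norm_single m (w m)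
    rw [hnv, h1, ← smul_assoc]
    congr 1
    simp [Complex.real_smul, div_eq_inv_mul]
  rw [← hve]
  simpa only [hnc] using hfinal

/-- The lifted linear flow `c(t)_k = e^{2kt} w_k` on `ℂ^{N+1} ∖ {0}`: each coordinate
satisfies `(c(t)_k)' = 2k · c(t)_k`, and the normalized curve `c(t)/‖c(t)‖` converges as
`t → +∞` (resp. `t → −∞`) to `(w_j/|w_j|) e_j` (resp. `(w_i/|w_i|) e_i`), where `j`
(resp. `i`) is the maximal (resp. minimal) index in the support of `w`. -/
theorem stmt2 (N : ℕ) (w : EuclideanSpace ℂ (Fin (N + 1))) (hw : w ≠ 0)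
    (c : ℝ → EuclideanSpace ℂ (Fin (N + 1)))
    (hc : ∀ t k, c t k = (Real.exp (2 * ((k : ℕ) : ℝ) * t) : ℂ) * w k)
    (j i : Fin (N + 1))
    (hj : w j ≠ 0) (hjmax : ∀ k, w k ≠ 0 → k ≤ j)
    (hi : w i ≠ 0) (himin : ∀ k, w k ≠ 0 → i ≤ k) :
    (∀ (k : Fin (N + 1)) (t : ℝ),
      HasDerivAt (fun s => c s k) ((2 * ((k : ℕ) : ℂ)) * c t k) t) ∧
    Tendsto (fun t => ‖c t‖⁻¹ • c t) atTop
      (nhds ((w j / (‖w j‖ : ℂ)) • EuclideanSpace.single j (1 : ℂ))) ∧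
    Tendsto (fun t => ‖c t‖⁻¹ • c t) atBot
      (nhds ((w i / (‖w i‖ : ℂ)) • EuclideanSpace.single i (1 : ℂ))) := by
  refine ⟨?_, ?_, ?_⟩
  · intro k t
    have h1 : HasDerivAt (fun s : ℝ => Real.exp (2 * ((k : ℕ) : ℝ) * s))
        (2 * ((k : ℕ) : ℝ) * Real.exp (2 * ((k : ℕ) : ℝ) * t)) t := by
      have := (Real.hasDerivAt_exp (2 * ((k : ℕ) : ℝ) * t)).comp t
        ((hasDerivAt_id t).const_mul (2 * ((k : ℕ) : ℝ)))
      simpa [Function.comp_def, mul_comm] using this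
    have h2 := (h1.ofReal_comp).mul_const (w k)
    have h3 : (fun s => c s k) = fun s => (Real.exp (2 * ((k : ℕ) : ℝ) * s) : ℂ) * w k := by
      funext s; exact hc s k
    rw [h3]
    rw [hc t k]
    convert h2 using 1
    · rfl
    push_cast
    ring
  · refine aux2 N w c hc j hj atTop ?_
    intro k hk hkj
    have hlt : ((k : ℕ) : ℝ) - ((j : ℕ) : ℝ) < 0 := by
      have := hjmax k hk
      have : (k : ℕ) < (j : ℕ) := lt_of_le_of_ne this (fun h => hkj (Fin.ext h))
      have := Nat.cast_lt (α := ℝ) |>.mpr this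
      linarith
    have : Tendsto (fun t : ℝ => 2 * (((k : ℕ) : ℝ) - ((j : ℕ) : ℝ)) * t) atTop atBot := by
      apply (tendsto_const_mul_atBot_of_neg (by linarith)).mpr tendsto_id
    exact Real.tendsto_exp_atBot.comp this
  · refine aux2 N w c hc i hi atBot ?_
    intro k hk hki
    have hlt : (0:ℝ) < ((k : ℕ) : ℝ) - ((i : ℕ) : ℝ) := by
      have := himin k hk
      have : (i : ℕ) < (k : ℕ) := lt_of_le_of_ne this (fun h => hki (Fin.ext h.symm))
      have := Nat.cast_lt (α := ℝ) |>.mpr this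
      linarith
    have : Tendsto (fun t : ℝ => 2 * (((k : ℕ) : ℝ) - ((i : ℕ) : ℝ)) * t) atBot atBot := by
      apply (tendsto_const_mul_atBot_of_pos (by linarith)).mpr tendsto_id
    exact Real.tendsto_exp_atBot.comp this
end
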